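/- arXiv:1705.01220 — 6 statements merged into one kernel-verified Lean document; each statement's English description precedes it below -/
import Mathlib

section
/- The map sending a nonempty compact convex set D ⊆ ℝⁿ to the restriction of its support function to the unit sphere S^{n-1} is an isometry from the space of nonempty compact convex subsets of ℝⁿ with the Hausdorff metric into C(S^{n-1}) with the sup norm: the Hausdorff distance between D and K equals the sup-norm distance between h_D|_{S^{n-1}} and h_K|_{S^{n-1}}. -/
open Metric MeasureTheory Set TopologicalSpace
open scoped RealInnerProductSpace

/-- The support function of a set `D ⊆ ℝⁿ`: `h_D(v) = sup {⟨x, v⟩ : x ∈ D}`. -/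
noncomputable def suppFn {n : ℕ} (D : Set (EuclideanSpace ℝ (Fin n)))
    (v : EuclideanSpace ℝ (Fin n)) : ℝ :=
  sSup ((fun x => ⟪x, v⟫) '' D)

lemma inner_le_suppFn {n : ℕ} {D : Set (EuclideanSpace ℝ (Fin n))} (hD : IsCompact D)
    {x : EuclideanSpace ℝ (Fin n)} (hx : x ∈ D) (v : EuclideanSpace ℝ (Fin n)) :
    ⟪x, v⟫ ≤ suppFn D v :=
  le_csSup ((hD.image (continuous_id.inner continuous_const)).bddAbove) ⟨x, hx, rfl⟩

lemma suppFn_le {n : ℕ} {D : Set (EuclideanSpace ℝ (Fin n))} (hD : D.Nonempty)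
    {v : EuclideanSpace ℝ (Fin n)} {c : ℝ} (h : ∀ x ∈ D, ⟪x, v⟫ ≤ c) :
    suppFn D v ≤ c :=
  csSup_le (hD.image _) (by rintro _ ⟨x, hx, rfl⟩; exact h x hx)

lemma suppFn_sub_le {n : ℕ} {D K : Set (EuclideanSpace ℝ (Fin n))}
    (hDne : D.Nonempty) (hKne : K.Nonempty) (hKcomp : IsCompact K)
    (hfin : EMetric.hausdorffEdist D K ≠ ⊤)
    {u : EuclideanSpace ℝ (Fin n)} (hu : ‖u‖ = 1) :
    suppFn D u - suppFn K u ≤ hausdorffDist D K := by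
  rw [sub_le_iff_le_add]
  refine suppFn_le hDne fun x hx => ?_
  obtain ⟨y, hy, hxy⟩ := hKcomp.exists_infDist_eq_dist hKne x
  have h1 : ⟪x - y, u⟫ ≤ ‖x - y‖ * ‖u‖ := real_inner_le_norm _ _
  have h2 : ⟪y, u⟫ ≤ suppFn K u := inner_le_suppFn hKcomp hy u
  have h3 : infDist x K ≤ hausdorffDist D K := infDist_le_hausdorffDist_of_mem hx hfin
  have h4 : ⟪x, u⟫ - ⟪y, u⟫ = ⟪x - y, u⟫ := (inner_sub_left _ _ _).symm
  have h5 : dist x y = ‖x - y‖ := dist_eq_norm _ _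
  nlinarith [norm_nonneg (x - y)]

lemma exists_unit_infDist_le {n : ℕ} {K : Set (EuclideanSpace ℝ (Fin n))}
    (hKne : K.Nonempty) (hKcomp : IsCompact K) (hKconv : Convex ℝ K)
    {x : EuclideanSpace ℝ (Fin n)} (hx : x ∉ K) :
    ∃ u : EuclideanSpace ℝ (Fin n), ‖u‖ = 1 ∧
      infDist x K + suppFn K u ≤ ⟪x, u⟫ := by
  obtain ⟨p, hp, hxp⟩ := hKcomp.exists_infDist_eq_dist hKne x
  have hne : x - p ≠ 0 := sub_ne_zero.2 fun h => hx (h ▸ hp)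
  set d : ℝ := ‖x - p‖ with hd
  have hdpos : 0 < d := norm_pos_iff.2 hne
  have hinf : infDist x K = d := by rw [hxp, dist_eq_norm]
  have hproj : ∀ w ∈ K, ⟪x - p, w - p⟫ ≤ 0 := by
    rw [← norm_eq_iInf_iff_real_inner_le_zero hKconv hp]
    have : (⨅ w : K, ‖x - (w : EuclideanSpace ℝ (Fin n))‖) = infDist x K := by
      rw [infDist_eq_iInf]
      exact iInf_congr fun w => (dist_eq_norm _ _).symm
    rw [this, hinf]
  refine ⟨d⁻¹ • (x - p), ?_, ?_⟩
  · rw [norm_smul, norm_inv, Real.norm_eq_abs, abs_of_pos hdpos]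
    field_simp
    exact hd.symm
  · have hK_le : suppFn K (d⁻¹ • (x - p)) ≤ ⟪x, d⁻¹ • (x - p)⟫ - d := by
      refine suppFn_le hKne fun w hw => ?_
      have h1 : ⟪x - p, w - p⟫ ≤ 0 := hproj w hw
      have h2 : ⟪x - w, x - p⟫ = ⟪x - p, x - p⟫ - ⟪x - p, w - p⟫ := by
        simp only [inner_sub_left, inner_sub_right]
        rw [real_inner_comm p x, real_inner_comm w x, real_inner_comm w p]
        ring
      have h3 : ⟪x - p, x - p⟫ = d ^ 2 := by
        rw [real_inner_self_eq_norm_sq]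
      have h4 : ⟪x, d⁻¹ • (x - p)⟫ - ⟪w, d⁻¹ • (x - p)⟫ = d⁻¹ * ⟪x - w, x - p⟫ := by
        rw [real_inner_smul_right, real_inner_smul_right, ← mul_sub, ← inner_sub_left]
      have h5 : d⁻¹ * ⟪x - w, x - p⟫ ≥ d⁻¹ * d ^ 2 := by
        apply mul_le_mul_of_nonneg_left _ (le_of_lt (inv_pos.2 hdpos))
        nlinarith
      have h6 : d⁻¹ * d ^ 2 = d := by field_simp
      linarith
    linarith [hinf]

lemma infDist_le_iSup_abs {n : ℕ} (hn : 2 ≤ n) {D K : Set (EuclideanSpace ℝ (Fin n))}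
    (hDne : D.Nonempty) (hDcomp : IsCompact D)
    (hKne : K.Nonempty) (hKcomp : IsCompact K) (hKconv : Convex ℝ K)
    (hbdd : BddAbove (Set.range fun u : sphere (0 : EuclideanSpace ℝ (Fin n)) 1 =>
      |suppFn D (u : EuclideanSpace ℝ (Fin n)) - suppFn K (u : EuclideanSpace ℝ (Fin n))|))
    {x : EuclideanSpace ℝ (Fin n)} (hx : x ∈ D) :
    infDist x K ≤ ⨆ u : sphere (0 : EuclideanSpace ℝ (Fin n)) 1,
      |suppFn D (u : EuclideanSpace ℝ (Fin n)) - suppFn K (u : EuclideanSpace ℝ (Fin n))| := by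
  haveI : Nonempty (Fin n) := ⟨⟨0, by omega⟩⟩
  haveI : Nontrivial (EuclideanSpace ℝ (Fin n)) := inferInstance
  obtain ⟨u₀, hu₀⟩ := (NormedSpace.sphere_nonempty (E := EuclideanSpace ℝ (Fin n))).2 zero_le_one
  by_cases hxK : x ∈ K
  · rw [infDist_zero_of_mem hxK]
    calc (0 : ℝ) ≤ |suppFn D u₀ - suppFn K u₀| := abs_nonneg _
      _ ≤ _ := le_ciSup hbdd ⟨u₀, hu₀⟩
  · obtain ⟨u, hu, hle⟩ := exists_unit_infDist_le hKne hKcomp hKconv hxK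
    have husph : u ∈ sphere (0 : EuclideanSpace ℝ (Fin n)) 1 :=
      mem_sphere_zero_iff_norm.2 hu
    have h1 : ⟪x, u⟫ ≤ suppFn D u := inner_le_suppFn hDcomp hx u
    calc infDist x K ≤ suppFn D u - suppFn K u := by linarith
      _ ≤ |suppFn D u - suppFn K u| := le_abs_self _
      _ ≤ _ := le_ciSup hbdd ⟨u, husph⟩

/-- the support-function map is an isometry: the Hausdorff distance of two
nonempty compact convex sets equals the sup-norm distance of their support functions
restricted to the unit sphere. -/
theorem hausdorffDist_eq_sup_suppFn (n : ℕ) (hn : 2 ≤ n)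
    (D K : Set (EuclideanSpace ℝ (Fin n)))
    (hDne : D.Nonempty) (hDcomp : IsCompact D) (hDconv : Convex ℝ D)
    (hKne : K.Nonempty) (hKcomp : IsCompact K) (hKconv : Convex ℝ K) :
    hausdorffDist D K =
      ⨆ u : sphere (0 : EuclideanSpace ℝ (Fin n)) 1,
        |suppFn D (u : EuclideanSpace ℝ (Fin n)) - suppFn K (u : EuclideanSpace ℝ (Fin n))| := by
  haveI : Nonempty (Fin n) := ⟨⟨0, by omega⟩⟩
  haveI : Nontrivial (EuclideanSpace ℝ (Fin n)) := inferInstance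
  haveI hsph : Nonempty (sphere (0 : EuclideanSpace ℝ (Fin n)) 1) :=
    ((NormedSpace.sphere_nonempty (E := EuclideanSpace ℝ (Fin n))).2 zero_le_one).to_subtype
  have hfin : EMetric.hausdorffEdist D K ≠ ⊤ :=
    hausdorffEdist_ne_top_of_nonempty_of_bounded hDne hKne hDcomp.isBounded hKcomp.isBounded
  have hfin' : EMetric.hausdorffEdist K D ≠ ⊤ := by
    rw [show EMetric.hausdorffEdist K D = EMetric.hausdorffEdist D K from EMetric.hausdorffEdist_comm]; exact hfin
  have habs : ∀ u : sphere (0 : EuclideanSpace ℝ (Fin n)) 1,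
      |suppFn D (u : EuclideanSpace ℝ (Fin n)) - suppFn K (u : EuclideanSpace ℝ (Fin n))| ≤
        hausdorffDist D K := by
    intro u
    have hu : ‖(u : EuclideanSpace ℝ (Fin n))‖ = 1 := mem_sphere_zero_iff_norm.1 u.2
    rw [abs_sub_le_iff]
    constructor
    · exact suppFn_sub_le hDne hKne hKcomp hfin hu
    · rw [hausdorffDist_comm]
      exact suppFn_sub_le hKne hDne hDcomp hfin' hu
  have hbdd : BddAbove (Set.range fun u : sphere (0 : EuclideanSpace ℝ (Fin n)) 1 =>
      |suppFn D (u : EuclideanSpace ℝ (Fin n)) - suppFn K (u : EuclideanSpace ℝ (Fin n))|) :=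
    ⟨hausdorffDist D K, by rintro _ ⟨u, rfl⟩; exact habs u⟩
  have hbdd' : BddAbove (Set.range fun u : sphere (0 : EuclideanSpace ℝ (Fin n)) 1 =>
      |suppFn K (u : EuclideanSpace ℝ (Fin n)) - suppFn D (u : EuclideanSpace ℝ (Fin n))|) := by
    convert hbdd using 3 with u
    exact abs_sub_comm _ _
  refine le_antisymm ?_ (ciSup_le habs)
  have hr0 : (0 : ℝ) ≤ ⨆ u : sphere (0 : EuclideanSpace ℝ (Fin n)) 1,
      |suppFn D (u : EuclideanSpace ℝ (Fin n)) - suppFn K (u : EuclideanSpace ℝ (Fin n))| := by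
    obtain ⟨u⟩ := hsph
    exact le_trans (abs_nonneg _) (le_ciSup hbdd u)
  refine hausdorffDist_le_of_infDist hr0 ?_ ?_
  · intro x hx
    exact infDist_le_iSup_abs hn hDne hDcomp hKne hKcomp hKconv hbdd hx
  · intro x hx
    have h := infDist_le_iSup_abs hn hKne hKcomp hDne hDcomp hDconv hbdd' hx
    calc infDist x D ≤ _ := h
      _ = _ := iSup_congr fun u => abs_sub_comm _ _
end

section
/- If D is a nonempty compact convex subset of ℝⁿ whose support function h_D is C² on ℝⁿ∖{0}, and t > 0, then the support function of the Minkowski sum D + t·Bⁿ restricted to ℝⁿ∖{0} has positive definite restriction of its Hessian to directions tangent to the sphere; in particular, its gradient restricted to S^{n-1} is an immersion. -/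
open Metric MeasureTheory Set TopologicalSpace
open scoped RealInnerProductSpace Pointwise

section Aux

variable {E : Type*} [NormedAddCommGroup E] [InnerProductSpace ℝ E]

/-- If `g` is monotone on a neighborhood of `0` and has a derivative there, the derivative
is nonnegative. -/
lemma aux_deriv_nonneg_of_monotoneOn {g : ℝ → ℝ} {g' : ℝ} {s : Set ℝ}
    (hs : s ∈ nhds (0 : ℝ)) (hm : MonotoneOn g s) (h : HasDerivAt g g' 0) : 0 ≤ g' := by
  have ht := hasDerivAt_iff_tendsto_slope.1 h
  have h2 : Filter.Tendsto (slope g 0) (nhdsWithin (0:ℝ) (Set.Ioi 0)) (nhds g') :=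
    ht.mono_left (nhdsWithin_mono _ (fun x hx => ne_of_gt hx))
  refine ge_of_tendsto h2 ?_
  have hs' : s ∈ nhdsWithin (0:ℝ) (Set.Ioi 0) := nhdsWithin_le_nhds hs
  filter_upwards [hs', self_mem_nhdsWithin] with x hx h0
  have h0s : (0:ℝ) ∈ s := mem_of_mem_nhds hs
  have hmono := hm h0s hx (le_of_lt h0)
  rw [slope_def_field]
  apply div_nonneg (by linarith) (by simpa using le_of_lt h0)

/-- Derivative of the norm away from the origin. -/
lemma aux_hasFDerivAt_norm {y : E} (hy : y ≠ 0) :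
    HasFDerivAt (fun z : E => ‖z‖) (‖y‖⁻¹ • innerSL ℝ y) y := by
  have hq : HasFDerivAt (fun z : E => ⟪z, z⟫)
      ((fderivInnerCLM ℝ (y, y)).comp ((ContinuousLinearMap.id ℝ E).prod
        (ContinuousLinearMap.id ℝ E))) y :=
    (hasFDerivAt_id y).inner ℝ (hasFDerivAt_id y)
  have hsq : Real.sqrt ⟪y, y⟫ = ‖y‖ := by
    rw [real_inner_self_eq_norm_sq, Real.sqrt_sq (norm_nonneg y)]
  have hpos : (0:ℝ) < ⟪y, y⟫ := by
    have := norm_pos_iff.2 hy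
    rw [real_inner_self_eq_norm_sq]
    positivity
  have hs : HasDerivAt Real.sqrt (1 / (2 * Real.sqrt ⟪y, y⟫)) ⟪y, y⟫ :=
    Real.hasDerivAt_sqrt (ne_of_gt hpos)
  have hc := HasDerivAt.comp_hasFDerivAt (f := fun z : E => ⟪z, z⟫) y hs hq
  have hfun : (Real.sqrt ∘ fun z : E => ⟪z, z⟫) = fun z : E => ‖z‖ := by
    funext z
    simp only [Function.comp_apply, real_inner_self_eq_norm_sq, Real.sqrt_sq (norm_nonneg z)]
  rw [hfun] at hc
  refine hc.congr_fderiv ?_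
  symm
  ext w
  simp only [ContinuousLinearMap.smul_apply, innerSL_apply_apply, ContinuousLinearMap.coe_comp',
    Function.comp_apply, ContinuousLinearMap.prod_apply, ContinuousLinearMap.coe_id', id_eq,
    fderivInnerCLM_apply, ContinuousLinearMap.coe_smul', Pi.smul_apply, smul_eq_mul, hsq]
  rw [real_inner_comm w y]
  rw [hsq] at *
  field_simp
  ring

end Aux

section Slice

variable {E : Type*} [NormedAddCommGroup E] [InnerProductSpace ℝ E]

/-- The Hessian of a convex `C²` function is positive semidefinite. -/
lemma aux_hessian_nonneg {f : E → ℝ} (hconv : ConvexOn ℝ Set.univ f)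
    (hC2 : ContDiffOn ℝ 2 f {(0:E)}ᶜ) {x : E} (hx : x ≠ 0) (v : E) :
    0 ≤ fderiv ℝ (fderiv ℝ f) x v v := by
  have hopen : IsOpen ({(0:E)}ᶜ) := isOpen_compl_singleton
  set δ : ℝ := ‖x‖ / (‖v‖ + 1) with hδ
  have hδpos : 0 < δ := div_pos (norm_pos_iff.2 hx) (by positivity)
  set I : Set ℝ := Set.Ioo (-δ) δ with hI
  have hline : ∀ s : ℝ, s ∈ I → x + s • v ≠ 0 := by
    intro s hs h0
    have hxe : x = -(s • v) := eq_neg_of_add_eq_zero_left h0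
    have h1 : ‖x‖ = |s| * ‖v‖ := by rw [hxe]; simp [norm_smul]
    have h2 : |s| < δ := abs_lt.2 ⟨hs.1, hs.2⟩
    have h3 : |s| * ‖v‖ ≤ |s| * (‖v‖ + 1) := by nlinarith [abs_nonneg s]
    have h4 : |s| * (‖v‖ + 1) < δ * (‖v‖ + 1) := by nlinarith [norm_nonneg v]
    have h5 : δ * (‖v‖ + 1) = ‖x‖ := by rw [hδ]; exact div_mul_cancel₀ _ (by positivity)
    linarith [h1, h3, h4, h5]
  have hlderiv : ∀ s : ℝ, HasDerivAt (fun s : ℝ => x + s • v) v s := by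
    intro s
    simpa using ((hasDerivAt_id s).smul_const v).const_add x
  have hca : ∀ s ∈ I, ContDiffAt ℝ 2 f (x + s • v) := fun s hs =>
    (hC2 _ (hline s hs)).contDiffAt (hopen.mem_nhds (hline s hs))
  set φ : ℝ → ℝ := fun s => f (x + s • v) with hφ
  set ψ : ℝ → ℝ := fun s => fderiv ℝ f (x + s • v) v with hψ
  have hφ' : ∀ s ∈ I, HasDerivAt φ (ψ s) s := by
    intro s hs
    exact (((hca s hs).differentiableAt two_ne_zero).hasFDerivAt).comp_hasDerivAt s (hlderiv s)
  -- convexity of φ on I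
  have hφconv : ConvexOn ℝ I φ := by
    have := hconv.comp_affineMap (AffineMap.lineMap x (x + v) : ℝ →ᵃ[ℝ] E)
    have heq : (f ∘ (AffineMap.lineMap x (x + v) : ℝ →ᵃ[ℝ] E)) = φ := by
      funext s
      simp [hφ, AffineMap.lineMap_apply, add_comm]
    rw [heq] at this
    exact (this.subset (Set.subset_univ _) (convex_Ioo _ _)).congr (fun _ _ => rfl)
  -- monotonicity of ψ on I
  have hmono : MonotoneOn ψ I := by
    intro a ha b hb hab
    have := hφconv.monotoneOn_deriv
      (fun s hs => (hφ' s hs).differentiableAt) ha hb hab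
    rwa [(hφ' a ha).deriv, (hφ' b hb).deriv] at this
  -- ψ has derivative fderiv (fderiv f) x v v at 0
  have hzero : x + (0:ℝ) • v = x := by simp
  have hdf : HasFDerivAt (fderiv ℝ f) (fderiv ℝ (fderiv ℝ f) x) x := by
    have h1 : ContDiffAt ℝ 2 f x := (hC2 x hx).contDiffAt (hopen.mem_nhds hx)
    exact ((h1.fderiv_right (m := 1) (le_refl _)).differentiableAt one_ne_zero).hasFDerivAt
  have hψ' : HasDerivAt ψ (fderiv ℝ (fderiv ℝ f) x v v) 0 := by
    have hdf0 : HasFDerivAt (fderiv ℝ f) (fderiv ℝ (fderiv ℝ f) x) (x + (0:ℝ) • v) := by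
      rw [hzero]; exact hdf
    have h1 : HasDerivAt (fun s : ℝ => fderiv ℝ f (x + s • v))
        (fderiv ℝ (fderiv ℝ f) x v) 0 := hdf0.comp_hasDerivAt 0 (hlderiv 0)
    have h2 := ((ContinuousLinearMap.apply ℝ ℝ v).hasFDerivAt.comp_hasDerivAt 0 h1)
    exact h2
  have hInhds : I ∈ nhds (0:ℝ) := by
    rw [hI]
    exact Ioo_mem_nhds (by linarith) hδpos
  exact aux_deriv_nonneg_of_monotoneOn hInhds hmono hψ'

end Slice

section SuppFn

variable {n : ℕ}

lemma suppFn_convexOn {D : Set (EuclideanSpace ℝ (Fin n))} (hne : D.Nonempty)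
    (hcomp : IsCompact D) : ConvexOn ℝ Set.univ (suppFn D) := by
  refine ⟨convex_univ, ?_⟩
  intro u _ w _ a b ha hb hab
  unfold suppFn
  apply csSup_le (hne.image _)
  rintro r ⟨z, hz, rfl⟩
  show ⟪z, a • u + b • w⟫ ≤ _
  have hz1 : ⟪z, a • u + b • w⟫ = a * ⟪z, u⟫ + b * ⟪z, w⟫ := by
    rw [inner_add_right, real_inner_smul_right, real_inner_smul_right]
  rw [hz1]
  have hb1 : BddAbove ((fun x => ⟪x, u⟫) '' D) :=
    (hcomp.image (continuous_id.inner continuous_const)).bddAbove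
  have hb2 : BddAbove ((fun x => ⟪x, w⟫) '' D) :=
    (hcomp.image (continuous_id.inner continuous_const)).bddAbove
  have h1 : ⟪z, u⟫ ≤ sSup ((fun x => ⟪x, u⟫) '' D) := le_csSup hb1 (Set.mem_image_of_mem _ hz)
  have h2 : ⟪z, w⟫ ≤ sSup ((fun x => ⟪x, w⟫) '' D) := le_csSup hb2 (Set.mem_image_of_mem _ hz)
  have := add_le_add (mul_le_mul_of_nonneg_left h1 ha) (mul_le_mul_of_nonneg_left h2 hb)
  simpa [smul_eq_mul] using this

lemma suppFn_add_ball {D : Set (EuclideanSpace ℝ (Fin n))} (hne : D.Nonempty)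
    (hcomp : IsCompact D) {t : ℝ} (ht : 0 < t) :
    suppFn (D + t • closedBall (0 : EuclideanSpace ℝ (Fin n)) 1)
      = fun v => suppFn D v + t * ‖v‖ := by
  have hball : t • closedBall (0 : EuclideanSpace ℝ (Fin n)) 1 = closedBall 0 t := by
    rw [_root_.smul_closedBall t (0 : EuclideanSpace ℝ (Fin n)) zero_le_one]
    simp [Real.norm_eq_abs, abs_of_pos ht]
  funext v
  unfold suppFn
  rw [hball]
  have hneB : (closedBall (0 : EuclideanSpace ℝ (Fin n)) t).Nonempty :=
    ⟨0, mem_closedBall_self ht.le⟩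
  have hneT : (D + closedBall (0 : EuclideanSpace ℝ (Fin n)) t).Nonempty := hne.add hneB
  rcases eq_or_ne v 0 with rfl | hv
  · have h1 : (fun x : EuclideanSpace ℝ (Fin n) => ⟪x, (0 : EuclideanSpace ℝ (Fin n))⟫)
        = fun _ => (0:ℝ) := by funext x; simp
    rw [h1, hneT.image_const, hne.image_const]
    simp
  · have hbdD : BddAbove ((fun x => ⟪x, v⟫) '' D) :=
      (hcomp.image (continuous_id.inner continuous_const)).bddAbove
    have hcompT : IsCompact (D + closedBall (0 : EuclideanSpace ℝ (Fin n)) t) :=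
      hcomp.add (isCompact_closedBall 0 t)
    have hbdT : BddAbove ((fun x => ⟪x, v⟫) '' (D + closedBall 0 t)) :=
      (hcompT.image (continuous_id.inner continuous_const)).bddAbove
    apply le_antisymm
    · apply csSup_le (hneT.image _)
      rintro r ⟨z, hz, rfl⟩
      rcases Set.mem_add.1 hz with ⟨y1, hy1, y2, hy2, rfl⟩
      show ⟪y1 + y2, v⟫ ≤ _
      have h1 : ⟪y1, v⟫ ≤ sSup ((fun x => ⟪x, v⟫) '' D) :=
        le_csSup hbdD (Set.mem_image_of_mem _ hy1)
      have h2 : ⟪y2, v⟫ ≤ t * ‖v‖ := by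
        have := real_inner_le_norm y2 v
        have hy2' : ‖y2‖ ≤ t := by simpa using mem_closedBall_zero_iff.1 hy2
        nlinarith [norm_nonneg v]
      have h3 : ⟪y1 + y2, v⟫ = ⟪y1, v⟫ + ⟪y2, v⟫ := inner_add_left _ _ _
      rw [h3]; linarith
    · have key : ∀ z ∈ D, ⟪z, v⟫ + t * ‖v‖
          ≤ sSup ((fun x => ⟪x, v⟫) '' (D + closedBall 0 t)) := by
        intro z hz
        set y : EuclideanSpace ℝ (Fin n) := (t / ‖v‖) • v with hy
        have hvpos : (0:ℝ) < ‖v‖ := norm_pos_iff.2 hv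
        have hyn : ‖y‖ = t := by
          rw [hy, norm_smul, Real.norm_eq_abs, abs_of_pos (div_pos ht hvpos)]
          field_simp
        have hymem : y ∈ closedBall (0 : EuclideanSpace ℝ (Fin n)) t := by
          rw [mem_closedBall_zero_iff, hyn]
        have hmem : z + y ∈ D + closedBall (0 : EuclideanSpace ℝ (Fin n)) t :=
          Set.add_mem_add hz hymem
        have hval : ⟪z + y, v⟫ = ⟪z, v⟫ + t * ‖v‖ := by
          rw [inner_add_left, hy, real_inner_smul_left, real_inner_self_eq_norm_mul_norm]
          field_simp
        have h6 : ⟪z + y, v⟫ ≤ sSup ((fun x => ⟪x, v⟫) '' (D + closedBall 0 t)) :=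
          le_csSup hbdT (Set.mem_image_of_mem _ hmem)
        rw [hval] at h6
        exact h6
      have h4 : sSup ((fun x => ⟪x, v⟫) '' D)
          ≤ sSup ((fun x => ⟪x, v⟫) '' (D + closedBall 0 t)) - t * ‖v‖ := by
        apply csSup_le (hne.image _)
        rintro r ⟨z, hz, rfl⟩
        have := key z hz
        linarith
      linarith

end SuppFn

/-- if `h_D` is `C²` away from the origin and `t > 0`, then the Hessian of the
support function of `D + t Bⁿ` is positive definite on directions tangent to the sphere;
in particular, its gradient restricted to the unit sphere is an immersion. -/
theorem suppFn_add_ball_hessian_posdef (n : ℕ) (D : Set (EuclideanSpace ℝ (Fin n)))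
    (hne : D.Nonempty) (hcomp : IsCompact D) (hconv : Convex ℝ D)
    (hC2 : ContDiffOn ℝ 2 (suppFn D) {(0 : EuclideanSpace ℝ (Fin n))}ᶜ)
    (t : ℝ) (ht : 0 < t) :
    (∀ x : EuclideanSpace ℝ (Fin n), x ≠ 0 →
      ∀ v : EuclideanSpace ℝ (Fin n), v ≠ 0 → ⟪v, x⟫ = 0 →
        0 < fderiv ℝ (fderiv ℝ (suppFn (D + t • closedBall (0 : EuclideanSpace ℝ (Fin n)) 1)))
              x v v) ∧
    (∀ u : EuclideanSpace ℝ (Fin n), ‖u‖ = 1 →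
      ∀ v : EuclideanSpace ℝ (Fin n), v ≠ 0 → ⟪v, u⟫ = 0 →
        fderiv ℝ (gradient (suppFn (D + t • closedBall (0 : EuclideanSpace ℝ (Fin n)) 1)))
            u v ≠ 0) := by
  classical
  have hsum := suppFn_add_ball hne hcomp ht
  set f : EuclideanSpace ℝ (Fin n) → ℝ := suppFn D with hf
  set G : EuclideanSpace ℝ (Fin n) → ℝ := fun v => f v + t * ‖v‖ with hG
  have hopen : IsOpen ({(0:EuclideanSpace ℝ (Fin n))}ᶜ) := isOpen_compl_singleton
  -- C² of G away from 0
  have hGC2 : ∀ x : EuclideanSpace ℝ (Fin n), x ≠ 0 → ContDiffAt ℝ 2 G x := by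
    intro x hx
    have h1 : ContDiffAt ℝ 2 f x := (hC2 x hx).contDiffAt (hopen.mem_nhds hx)
    have h2 : ContDiffAt ℝ 2 (fun y : EuclideanSpace ℝ (Fin n) => t * ‖y‖) x :=
      contDiffAt_const.mul (contDiffAt_norm ℝ hx)
    exact h1.add h2
  -- key positivity of the Hessian
  have key : ∀ x : EuclideanSpace ℝ (Fin n), x ≠ 0 → ∀ v : EuclideanSpace ℝ (Fin n), v ≠ 0 → ⟪v, x⟫ = 0 →
      0 < fderiv ℝ (fderiv ℝ G) x v v := by
    intro x hx v hv hvx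
    have hxv : ⟪x, v⟫ = 0 := by rw [real_inner_comm]; exact hvx
    -- swap: Hessian applied = derivative of directional derivative
    have hDG : DifferentiableAt ℝ (fderiv ℝ G) x :=
      ((hGC2 x hx).fderiv_right (m := 1) (le_refl _)).differentiableAt one_ne_zero
    have hswap : ∀ (h : EuclideanSpace ℝ (Fin n) → ℝ), DifferentiableAt ℝ (fderiv ℝ h) x →
        fderiv ℝ (fun y => fderiv ℝ h y v) x v = fderiv ℝ (fderiv ℝ h) x v v := by
      intro h hd
      have h1 : (fun y => fderiv ℝ h y v)
          = (⇑(ContinuousLinearMap.apply ℝ ℝ v) ∘ fderiv ℝ h) := rfl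
      have h2 := ((ContinuousLinearMap.apply ℝ ℝ v).hasFDerivAt.comp x
        hd.hasFDerivAt).fderiv
      rw [h1, h2]
      rfl
    -- derivative of the norm part
    have hvpos : (0:ℝ) < ‖v‖ := norm_pos_iff.2 hv
    have hxpos : (0:ℝ) < ‖x‖ := norm_pos_iff.2 hx
    -- HasFDerivAt for the directional derivative of the norm part
    have hinnerv : HasFDerivAt (fun y : EuclideanSpace ℝ (Fin n) => ⟪y, v⟫) (innerSL ℝ v) x := by
      have : (fun y : EuclideanSpace ℝ (Fin n) => ⟪y, v⟫) = fun y : EuclideanSpace ℝ (Fin n) => innerSL ℝ v y := by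
        funext y; rw [innerSL_apply_apply]; exact real_inner_comm v y
      rw [this]
      exact (innerSL ℝ v).hasFDerivAt
    have hinv : HasFDerivAt (fun y : EuclideanSpace ℝ (Fin n) => ‖y‖⁻¹)
        ((-(‖x‖ ^ 2)⁻¹) • (‖x‖⁻¹ • innerSL ℝ x)) x := by
      have := (hasDerivAt_inv (x := ‖x‖) (ne_of_gt hxpos)).comp_hasFDerivAt x
        (aux_hasFDerivAt_norm hx)
      exact this
    have hBder : HasFDerivAt (fun y : EuclideanSpace ℝ (Fin n) => ‖y‖⁻¹ * ⟪y, v⟫)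
        (‖x‖⁻¹ • innerSL ℝ v + ⟪x, v⟫ • ((-(‖x‖ ^ 2)⁻¹) • (‖x‖⁻¹ • innerSL ℝ x))) x :=
      hinv.mul hinnerv
    have hBval : (fderiv ℝ (fun y : EuclideanSpace ℝ (Fin n) => ‖y‖⁻¹ * ⟪y, v⟫) x) v = ‖x‖⁻¹ * ‖v‖ ^ 2 := by
      rw [hBder.fderiv, hxv]
      simp only [zero_smul, add_zero, ContinuousLinearMap.add_apply,
        ContinuousLinearMap.smul_apply, innerSL_apply_apply, smul_eq_mul,
        ContinuousLinearMap.zero_apply, real_inner_self_eq_norm_sq]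
    -- eventual equality of directional derivatives
    have hEq : (fun y => fderiv ℝ G y v)
        =ᶠ[nhds x] fun y => fderiv ℝ f y v + t * (‖y‖⁻¹ * ⟪y, v⟫) := by
      filter_upwards [hopen.mem_nhds hx] with y hy
      have hfy : DifferentiableAt ℝ f y :=
        ((hC2 y hy).contDiffAt (hopen.mem_nhds hy)).differentiableAt two_ne_zero
      have hny : HasFDerivAt (fun z : EuclideanSpace ℝ (Fin n) => t * ‖z‖) (t • (‖y‖⁻¹ • innerSL ℝ y)) y := by
        have := (aux_hasFDerivAt_norm (E := EuclideanSpace ℝ (Fin n)) hy).const_smul t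
        exact this
      have hGy : HasFDerivAt G (fderiv ℝ f y + t • (‖y‖⁻¹ • innerSL ℝ y)) y :=
        hfy.hasFDerivAt.add hny
      rw [hGy.fderiv]
      simp only [ContinuousLinearMap.add_apply, ContinuousLinearMap.smul_apply,
        innerSL_apply_apply, smul_eq_mul]
    -- differentiability of pieces
    have hdf : DifferentiableAt ℝ (fderiv ℝ f) x :=
      (((hC2 x hx).contDiffAt (hopen.mem_nhds hx)).fderiv_right
        (m := 1) (le_refl _)).differentiableAt one_ne_zero
    have hdA : DifferentiableAt ℝ (fun y => fderiv ℝ f y v) x := by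
      have h1 : (fun y => fderiv ℝ f y v)
          = (⇑(ContinuousLinearMap.apply ℝ ℝ v) ∘ fderiv ℝ f) := rfl
      rw [h1]
      exact ((ContinuousLinearMap.apply ℝ ℝ v).differentiable.differentiableAt).comp x hdf
    have hdB : DifferentiableAt ℝ (fun y : EuclideanSpace ℝ (Fin n) => t * (‖y‖⁻¹ * ⟪y, v⟫)) x :=
      (differentiableAt_const t).mul hBder.differentiableAt
    -- assemble
    have hmain : fderiv ℝ (fderiv ℝ G) x v v
        = fderiv ℝ (fderiv ℝ f) x v v + t * (‖x‖⁻¹ * ‖v‖ ^ 2) := by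
      rw [← hswap G hDG, hEq.fderiv_eq]
      have := fderiv_fun_add hdA hdB (x := x)
      rw [this]
      simp only [ContinuousLinearMap.add_apply]
      rw [hswap f hdf]
      congr 1
      have h2 : fderiv ℝ (fun y : EuclideanSpace ℝ (Fin n) => t * (‖y‖⁻¹ * ⟪y, v⟫)) x v
          = t * fderiv ℝ (fun y : EuclideanSpace ℝ (Fin n) => ‖y‖⁻¹ * ⟪y, v⟫) x v := by
        rw [fderiv_const_mul hBder.differentiableAt]
        simp
      rw [h2, hBval]
    rw [hmain]
    have hA : 0 ≤ fderiv ℝ (fderiv ℝ f) x v v :=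
      aux_hessian_nonneg (suppFn_convexOn hne hcomp) hC2 hx v
    have hB : 0 < t * (‖x‖⁻¹ * ‖v‖ ^ 2) := by positivity
    linarith
  constructor
  · intro x hx v hv hvx
    rw [hsum]
    exact key x hx v hv hvx
  · intro u hu v hv hvu
    rw [hsum]
    have hune : u ≠ 0 := by
      intro h; rw [h] at hu; simp at hu
    have hK := key u hune v hv hvu
    -- gradient is the dual of the derivative
    have hgradeq : gradient G = (⇑(InnerProductSpace.toDual ℝ (EuclideanSpace ℝ (Fin n))).symm) ∘ fderiv ℝ G := rfl
    have hDG : DifferentiableAt ℝ (fderiv ℝ G) u :=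
      ((hGC2 u hune).fderiv_right (m := 1) (le_refl _)).differentiableAt one_ne_zero
    intro hzero
    have hcomp2 : fderiv ℝ (gradient G) u v
        = (InnerProductSpace.toDual ℝ (EuclideanSpace ℝ (Fin n))).symm (fderiv ℝ (fderiv ℝ G) u v) := by
      rw [hgradeq, LinearIsometryEquiv.comp_fderiv]
      rfl
    rw [hcomp2] at hzero
    have : fderiv ℝ (fderiv ℝ G) u v v = 0 := by
      have h1 : ⟪(InnerProductSpace.toDual ℝ (EuclideanSpace ℝ (Fin n))).symm (fderiv ℝ (fderiv ℝ G) u v), v⟫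
          = fderiv ℝ (fderiv ℝ G) u v v := InnerProductSpace.toDual_symm_apply
      rw [hzero] at h1
      simpa using h1.symm
    linarith
end

section
/- For a nonempty compact convex set K ⊆ ℝⁿ, u ∈ S^{n-1}, and ε ≥ 0, define the truncation K_{u,ε} = {x ∈ K : ⟨x,u⟩ ≤ h_K(u) − ε}. If 0 ≤ ε < h_K(u) + h_K(−u) then K_{u,ε} is a nonempty compact convex set, and the map (K,ε) ↦ K_{u,ε} is continuous in the Hausdorff metric on the set where ε < h_K(u) + h_K(−u). -/
open Metric MeasureTheory Set TopologicalSpace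
open scoped RealInnerProductSpace Pointwise

section Aux

variable {n : ℕ}
local notation "E" => EuclideanSpace ℝ (Fin n)

lemma contInner (v : E) : Continuous (fun x : E => ⟪x, v⟫) :=
  continuous_id.inner continuous_const

lemma bddAbove_img {K : Set E} (hK : IsCompact K) (v : E) :
    BddAbove ((fun x : E => ⟪x, v⟫) '' K) :=
  (hK.image (contInner v)).bddAbove

lemma inner_le_suppFn_s13 {K : Set E} (hK : IsCompact K) {x : E} (hx : x ∈ K) (v : E) :
    ⟪x, v⟫ ≤ suppFn K v :=
  le_csSup (bddAbove_img hK v) (mem_image_of_mem _ hx)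

lemma suppFn_le_s13 {K : Set E} (hK : K.Nonempty) {v : E} {a : ℝ}
    (h : ∀ x ∈ K, ⟪x, v⟫ ≤ a) : suppFn K v ≤ a :=
  csSup_le (hK.image _) (by rintro _ ⟨x, hx, rfl⟩; exact h x hx)

lemma exists_suppFn_eq {K : Set E} (hne : K.Nonempty) (hK : IsCompact K) (v : E) :
    ∃ x ∈ K, ⟪x, v⟫ = suppFn K v := by
  obtain ⟨x, hx, hmax⟩ := hK.exists_isMaxOn hne (contInner v).continuousOn
  exact ⟨x, hx, le_antisymm (inner_le_suppFn_s13 hK hx v) (suppFn_le_s13 hne hmax)⟩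

lemma exists_min_pt {K : Set E} (hne : K.Nonempty) (hK : IsCompact K) (u : E) :
    ∃ p ∈ K, ⟪p, u⟫ = -suppFn K (-u) := by
  obtain ⟨p, hp, hpe⟩ := exists_suppFn_eq hne hK (-u)
  rw [inner_neg_right] at hpe
  exact ⟨p, hp, by linarith⟩

lemma suppFn_lipschitz {K K' : Set E} (hne : K.Nonempty) (hK : IsCompact K)
    (hne' : K'.Nonempty) (hK' : IsCompact K') {v : E} (hv : ‖v‖ = 1) {δ : ℝ}
    (hd : hausdorffDist K K' < δ) : suppFn K v ≤ suppFn K' v + δ := by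
  have hfin : EMetric.hausdorffEdist K K' ≠ ⊤ :=
    hausdorffEdist_ne_top_of_nonempty_of_bounded hne hne' hK.isBounded hK'.isBounded
  refine suppFn_le_s13 hne fun x hx => ?_
  obtain ⟨y, hy, hxy⟩ := exists_dist_lt_of_hausdorffDist_lt hx hd hfin
  have h1 : ⟪x - y, v⟫ ≤ ‖x - y‖ * ‖v‖ := real_inner_le_norm _ _
  have h2 : ⟪x, v⟫ = ⟪y, v⟫ + ⟪x - y, v⟫ := by rw [inner_sub_left]; ring
  have := inner_le_suppFn_s13 hK' hy v
  rw [hv, mul_one, (dist_eq_norm x y).symm] at h1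
  linarith

lemma push {S : Set E} (hS : Convex ℝ S) {u y p : E} (hy : y ∈ S) (hp : p ∈ S)
    {a t s : ℝ} (hpa : ⟪p, u⟫ ≤ a) (hat : a < t) (hys : ⟪y, u⟫ ≤ t + s) (hs : 0 ≤ s) :
    ∃ z ∈ S, ⟪z, u⟫ ≤ t ∧ dist y z ≤ s * dist y p / (t - a) := by
  by_cases h : ⟪y, u⟫ ≤ t
  · exact ⟨y, hy, h, by
      rw [dist_self]
      exact div_nonneg (mul_nonneg hs dist_nonneg) (by linarith)⟩
  · push_neg at h
    set l : ℝ := (⟪y, u⟫ - t) / (⟪y, u⟫ - ⟪p, u⟫) with hl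
    have hden : 0 < ⟪y, u⟫ - ⟪p, u⟫ := by linarith
    have hl0 : 0 ≤ l := by apply div_nonneg <;> linarith
    have hl1 : l ≤ 1 := by rw [div_le_one hden]; linarith
    refine ⟨(1 - l) • y + l • p, hS hy hp (by linarith) hl0 (by ring), ?_, ?_⟩
    · have h3 : ⟪(1 - l) • y + l • p, u⟫ = (1 - l) * ⟪y, u⟫ + l * ⟪p, u⟫ := by
        rw [inner_add_left, real_inner_smul_left, real_inner_smul_left]
      rw [h3]
      have hc : l * (⟪y, u⟫ - ⟪p, u⟫) = ⟪y, u⟫ - t := div_mul_cancel₀ _ hden.ne'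
      have heq : (1 - l) * ⟪y, u⟫ + l * ⟪p, u⟫ = t := by linear_combination -hc
      exact le_of_eq heq
    · have hz : y - ((1 - l) • y + l • p) = l • (y - p) := by
        rw [smul_sub, sub_smul, one_smul]; abel
      have hdist : dist y ((1 - l) • y + l • p) = l * dist y p := by
        rw [dist_eq_norm, hz, norm_smul, Real.norm_eq_abs, abs_of_nonneg hl0, dist_eq_norm]
      rw [hdist]
      have hls : l ≤ s / (t - a) := by
        rw [hl, div_le_div_iff₀ hden (by linarith)]
        nlinarith
      calc l * dist y p ≤ s / (t - a) * dist y p :=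
            mul_le_mul_of_nonneg_right hls dist_nonneg
        _ = s * dist y p / (t - a) := by ring

lemma reach {S : Set E} (hS : Convex ℝ S) {u y p : E} (hy : y ∈ S) (hp : p ∈ S)
    {a t s D c : ℝ} (hpa : ⟪p, u⟫ ≤ a) (hat : a < t) (hys : ⟪y, u⟫ ≤ t + s) (hs : 0 ≤ s)
    (hD : dist y p ≤ D) (hc : 0 < c) (hct : c ≤ t - a) :
    ∃ z ∈ S, ⟪z, u⟫ ≤ t ∧ dist y z ≤ s * D / c := by
  obtain ⟨z, hz, hzt, hdz⟩ := push hS hy hp hpa hat hys hs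
  refine ⟨z, hz, hzt, hdz.trans ?_⟩
  exact div_le_div₀ (mul_nonneg hs (dist_nonneg.trans hD))
    (mul_le_mul_of_nonneg_left hD hs) hc hct

end Aux

/-- for `0 ≤ ε < h_K(u) + h_K(-u)` the truncation
`K_{u,ε} = {x ∈ K | ⟨x,u⟩ ≤ h_K(u) - ε}` is a nonempty compact convex set, and
`(K, ε) ↦ K_{u,ε}` is continuous in the Hausdorff metric on this domain. -/
theorem truncation_wellDefined_and_continuous (n : ℕ) (u : EuclideanSpace ℝ (Fin n))
    (hu : ‖u‖ = 1) :
    (∀ K : Set (EuclideanSpace ℝ (Fin n)), K.Nonempty → IsCompact K → Convex ℝ K →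
      ∀ ε : ℝ, 0 ≤ ε → ε < suppFn K u + suppFn K (-u) →
        ({x ∈ K | ⟪x, u⟫ ≤ suppFn K u - ε}).Nonempty ∧
        IsCompact {x ∈ K | ⟪x, u⟫ ≤ suppFn K u - ε} ∧
        Convex ℝ {x ∈ K | ⟪x, u⟫ ≤ suppFn K u - ε}) ∧
    (∀ K : Set (EuclideanSpace ℝ (Fin n)), K.Nonempty → IsCompact K → Convex ℝ K →
      ∀ ε : ℝ, 0 ≤ ε → ε < suppFn K u + suppFn K (-u) →
      ∀ η : ℝ, 0 < η → ∃ δ : ℝ, 0 < δ ∧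
        ∀ K' : Set (EuclideanSpace ℝ (Fin n)), K'.Nonempty → IsCompact K' → Convex ℝ K' →
        ∀ ε' : ℝ, 0 ≤ ε' → ε' < suppFn K' u + suppFn K' (-u) →
          hausdorffDist K K' < δ → |ε - ε'| < δ →
            hausdorffDist {x ∈ K | ⟪x, u⟫ ≤ suppFn K u - ε}
              {x ∈ K' | ⟪x, u⟫ ≤ suppFn K' u - ε'} < η) := by
  have hlin : IsLinearMap ℝ (fun x : EuclideanSpace ℝ (Fin n) => ⟪x, u⟫) :=
    ⟨fun a b => inner_add_left a b u, fun c x => real_inner_smul_left x u c⟩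
  constructor
  · intro K hne hK hconv ε hε hw
    refine ⟨?_, ?_, ?_⟩
    · obtain ⟨p, hp, hpe⟩ := exists_min_pt hne hK u
      exact ⟨p, hp, by linarith⟩
    · exact hK.inter_right (isClosed_le (contInner u) continuous_const)
    · exact hconv.inter (convex_halfSpace_le hlin _)
  · intro K hne hK hconv ε hε hw η hη
    set c : ℝ := (suppFn K u + suppFn K (-u) - ε) / 2 with hcdef
    have hc : 0 < c := by simp only [hcdef]; linarith
    set D : ℝ := diam K + 2 with hDdef
    have hD : 0 < D := by have := diam_nonneg (s := K); linarith
    set B : ℝ := 1 + 3 * D / c with hBdef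
    have hB : 0 < B := by
      have h3 : 0 < 3 * D / c := by positivity
      rw [hBdef]; linarith
    refine ⟨min (min (c / 6) 1) (η / (2 * B)), by positivity, ?_⟩
    intro K' hne' hK' hconv' ε' hε' hw' hdK hde
    set δ : ℝ := min (min (c / 6) 1) (η / (2 * B)) with hδdef
    have hδ0 : 0 < δ := by positivity
    have hδc : δ ≤ c / 6 := le_trans (min_le_left _ _) (min_le_left _ _)
    have hδ1 : δ ≤ 1 := le_trans (min_le_left _ _) (min_le_right _ _)
    have hδη : δ ≤ η / (2 * B) := min_le_right _ _
    have hun : ‖(-u : EuclideanSpace ℝ (Fin n))‖ = 1 := by rw [norm_neg]; exact hu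
    have hdK' : hausdorffDist K' K < δ := by rwa [hausdorffDist_comm]
    -- support function estimates
    have hs1 : suppFn K u ≤ suppFn K' u + δ := suppFn_lipschitz hne hK hne' hK' hu hdK
    have hs2 : suppFn K' u ≤ suppFn K u + δ := suppFn_lipschitz hne' hK' hne hK hu hdK'
    have hs3 : suppFn K (-u) ≤ suppFn K' (-u) + δ := suppFn_lipschitz hne hK hne' hK' hun hdK
    have hs4 : suppFn K' (-u) ≤ suppFn K (-u) + δ := suppFn_lipschitz hne' hK' hne hK hun hdK'
    have heps : ε' ≤ ε + δ ∧ ε ≤ ε' + δ := by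
      constructor <;> [skip; skip] <;> cases abs_lt.mp hde with
      | intro h1 h2 => linarith
    -- levels
    set t : ℝ := suppFn K u - ε with htdef
    set t' : ℝ := suppFn K' u - ε' with ht'def
    have htt' : t ≤ t' + 2 * δ := by simp only [htdef, ht'def]; linarith [heps.2]
    have ht't : t' ≤ t + 2 * δ := by simp only [htdef, ht'def]; linarith [heps.1]
    -- margins
    have hmarK : c ≤ t - (-suppFn K (-u)) := by simp only [htdef, hcdef]; linarith
    have hmarK' : c ≤ t' - (-suppFn K' (-u)) := by
      have h6 : 3 * δ ≤ c / 2 := by linarith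
      simp only [ht'def, hcdef]; linarith [heps.1]
    -- diameter of K'
    have hfin : EMetric.hausdorffEdist K K' ≠ ⊤ :=
      hausdorffEdist_ne_top_of_nonempty_of_bounded hne hne' hK.isBounded hK'.isBounded
    have hfin' : EMetric.hausdorffEdist K' K ≠ ⊤ := by
      rw [EMetric.hausdorffEdist, Metric.hausdorffEDist_comm]; exact hfin
    have hdiamK : ∀ x ∈ K, ∀ y ∈ K, dist x y ≤ D := fun x hx y hy => by
      have := dist_le_diam_of_mem hK.isBounded hx hy
      linarith
    have hdiamK' : ∀ x ∈ K', ∀ y ∈ K', dist x y ≤ D := by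
      intro x hx y hy
      obtain ⟨x₀, hx₀, hxx₀⟩ := exists_dist_lt_of_hausdorffDist_lt hx hdK' hfin'
      obtain ⟨y₀, hy₀, hyy₀⟩ := exists_dist_lt_of_hausdorffDist_lt hy hdK' hfin'
      have h1 := dist_le_diam_of_mem hK.isBounded hx₀ hy₀
      calc dist x y ≤ dist x x₀ + dist x₀ y₀ + dist y₀ y := dist_triangle4 _ _ _ _
        _ ≤ δ + diam K + δ := by
            have := dist_comm y₀ y
            nlinarith [hxx₀.le, h1, hyy₀.le, dist_comm y₀ y]
        _ ≤ D := by simp only [hDdef]; linarith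
    -- min points
    obtain ⟨p, hp, hpe⟩ := exists_min_pt hne hK u
    obtain ⟨p', hp', hp'e⟩ := exists_min_pt hne' hK' u
    -- the Hausdorff bound
    have hinner_move : ∀ x y : EuclideanSpace ℝ (Fin n), dist x y ≤ δ →
        ⟪y, u⟫ ≤ ⟪x, u⟫ + δ := by
      intro x y hxy
      have h1 : ⟪y - x, u⟫ ≤ ‖y - x‖ * ‖u‖ := real_inner_le_norm _ _
      have h2 : ⟪y, u⟫ = ⟪x, u⟫ + ⟪y - x, u⟫ := by rw [inner_sub_left]; ring
      rw [hu, mul_one, ← dist_eq_norm, dist_comm] at h1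
      linarith
    have key : hausdorffDist {x ∈ K | ⟪x, u⟫ ≤ suppFn K u - ε}
        {x ∈ K' | ⟪x, u⟫ ≤ suppFn K' u - ε'} ≤ δ + 3 * δ * D / c := by
      apply hausdorffDist_le_of_mem_dist
      · positivity
      · rintro x ⟨hxK, hxt⟩
        obtain ⟨y, hy, hxy⟩ := exists_dist_lt_of_hausdorffDist_lt hxK hdK hfin
        have hyt : ⟪y, u⟫ ≤ t' + 3 * δ := by
          have := hinner_move x y hxy.le
          linarith
        obtain ⟨z, hz, hzt, hdz⟩ := reach hconv' hy hp' (le_of_eq hp'e)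
          (by linarith) hyt (by linarith) (hdiamK' y hy p' hp') hc hmarK'
        refine ⟨z, ⟨hz, hzt⟩, ?_⟩
        calc dist x z ≤ dist x y + dist y z := dist_triangle _ _ _
          _ ≤ δ + 3 * δ * D / c := by linarith [hxy.le]
      · rintro x ⟨hxK, hxt⟩
        obtain ⟨y, hy, hxy⟩ := exists_dist_lt_of_hausdorffDist_lt hxK hdK' hfin'
        have hyt : ⟪y, u⟫ ≤ t + 3 * δ := by
          have := hinner_move x y hxy.le
          linarith
        obtain ⟨z, hz, hzt, hdz⟩ := reach hconv hy hp (le_of_eq hpe)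
          (by linarith) hyt (by linarith) (hdiamK y hy p hp) hc hmarK
        refine ⟨z, ⟨hz, hzt⟩, ?_⟩
        calc dist x z ≤ dist x y + dist y z := dist_triangle _ _ _
          _ ≤ δ + 3 * δ * D / c := by linarith [hxy.le]
    refine lt_of_le_of_lt key ?_
    have hfinal : δ + 3 * δ * D / c = δ * B := by
      simp only [hBdef]; field_simp
    rw [hfinal]
    calc δ * B ≤ (η / (2 * B)) * B := mul_le_mul_of_nonneg_right hδη hB.le
      _ = η / 2 := by field_simp
      _ < η := by linarith
end

section
/- The set of line segments (possibly degenerate to a point) in ℝⁿ with Steiner point at the origin, topologized by the Hausdorff metric, is homeomorphic to the quotient ℝⁿ/{±1} (the open cone over ℝP^{n-1}). -/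
open Metric MeasureTheory Set TopologicalSpace
open scoped RealInnerProductSpace Pointwise

variable {n : ℕ}

private lemma seg_eq_image (v : EuclideanSpace ℝ (Fin n)) :
    segment ℝ (-v) v = (fun t : ℝ => t • v) '' Icc (-1 : ℝ) 1 := by
  ext x
  constructor
  · rintro ⟨a, b, ha, hb, hab, rfl⟩
    refine ⟨b - a, ⟨by linarith, by linarith⟩, ?_⟩
    simp [smul_neg, sub_smul]; abel
  · rintro ⟨t, ⟨ht1, ht2⟩, rfl⟩
    refine ⟨(1 - t) / 2, (1 + t) / 2, by linarith, by linarith, by ring, ?_⟩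
    module

private lemma seg_compact (v : EuclideanSpace ℝ (Fin n)) :
    IsCompact (segment ℝ (-v) v) := by
  rw [seg_eq_image]
  exact isCompact_Icc.image (by fun_prop)

noncomputable def segNC (v : EuclideanSpace ℝ (Fin n)) :
    NonemptyCompacts (EuclideanSpace ℝ (Fin n)) :=
  ⟨⟨segment ℝ (-v) v, seg_compact v⟩, ⟨v, right_mem_segment ℝ (-v) v⟩⟩

@[simp] lemma segNC_coe (v : EuclideanSpace ℝ (Fin n)) :
    (segNC v : Set (EuclideanSpace ℝ (Fin n))) = segment ℝ (-v) v := rfl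

private lemma segNC_inj {v w : EuclideanSpace ℝ (Fin n)} (h : segNC v = segNC w) :
    v = w ∨ v = -w := by
  have hsets : segment ℝ (-v) v = segment ℝ (-w) w := congrArg (·.toCompacts.carrier) h
  have hv : v ∈ segment ℝ (-w) w := hsets ▸ right_mem_segment ℝ (-v) v
  have hw : w ∈ segment ℝ (-v) v := hsets ▸ right_mem_segment ℝ (-w) w
  rw [seg_eq_image] at hv hw
  obtain ⟨s, hs, hsv⟩ := hv
  obtain ⟨t, ht, htw⟩ := hw
  simp only at hsv htw
  rcases eq_or_ne w 0 with rfl | hw0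
  · left; rw [← hsv, smul_zero]
  · have hst : t * s = 1 := by
      apply smul_left_injective ℝ (M := EuclideanSpace ℝ (Fin n)) hw0
      show (t*s) • w = (1:ℝ) • w
      rw [one_smul, mul_smul, hsv, htw]
    have h2 : s ^ 2 = 1 := by
      obtain ⟨ht1, ht2⟩ := ht
      obtain ⟨hs1, hs2⟩ := hs
      nlinarith [mul_nonneg (sq_nonneg s) (by nlinarith : (0:ℝ) ≤ 1 - t ^ 2)]
    rcases mul_eq_zero.1 (by nlinarith : (s - 1) * (s + 1) = 0) with h1 | h1
    · left; rw [← hsv, (by linarith : s = 1), one_smul]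
    · right; rw [← hsv, (by linarith : s = -1), neg_one_smul]

private lemma segNC_lipschitz (v w : EuclideanSpace ℝ (Fin n)) :
    dist (segNC v) (segNC w) ≤ dist v w := by
  rw [NonemptyCompacts.dist_eq]
  have key : ∀ (a b : EuclideanSpace ℝ (Fin n)), ∀ x ∈ segment ℝ (-a) a,
      ∃ y ∈ segment ℝ (-b) b, dist x y ≤ dist a b := by
    intro a b x hx
    rw [seg_eq_image] at hx
    obtain ⟨t, ht, rfl⟩ := hx
    refine ⟨t • b, by rw [seg_eq_image]; exact ⟨t, ht, rfl⟩, ?_⟩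
    rw [dist_eq_norm, ← smul_sub, norm_smul, Real.norm_eq_abs, dist_eq_norm]
    have : |t| ≤ 1 := abs_le.2 ht
    calc |t| * ‖a - b‖ ≤ 1 * ‖a - b‖ := by
          gcongr
      _ = ‖a - b‖ := one_mul _
  exact hausdorffDist_le_of_mem_dist dist_nonneg (key v w) fun y hy => by
    obtain ⟨x, hx, hd⟩ := key w v y hy
    exact ⟨x, hx, by rwa [dist_comm w v] at hd⟩

private lemma norm_le_dist_segNC (v : EuclideanSpace ℝ (Fin n)) :
    ‖v‖ ≤ dist (segNC v) (segNC 0) := by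
  rw [NonemptyCompacts.dist_eq]
  have h0 : (segNC (0 : EuclideanSpace ℝ (Fin n)) : Set (EuclideanSpace ℝ (Fin n))) = {0} := by
    rw [segNC_coe, neg_zero, segment_same]
  have fin : EMetric.hausdorffEdist (segment ℝ (-v) v) ((segNC (0 : EuclideanSpace ℝ (Fin n)) : Set (EuclideanSpace ℝ (Fin n)))) ≠ ⊤ := by
    apply hausdorffEdist_ne_top_of_nonempty_of_bounded
    · exact ⟨v, right_mem_segment ℝ (-v) v⟩
    · rw [h0]; exact ⟨0, rfl⟩
    · exact (seg_compact v).isBounded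
    · rw [h0]; exact Bornology.isBounded_singleton
  have := infDist_le_hausdorffDist_of_mem (right_mem_segment ℝ (-v) v) (h0 ▸ fin)
  rw [infDist_singleton, dist_zero_right] at this
  rwa [segNC_coe, h0]


set_option synthInstance.maxHeartbeats 1000000 in
set_option maxHeartbeats 1000000 in
/-- the hyperspace of line segments (possibly degenerate) in `ℝⁿ` with
Steiner point (midpoint) at the origin, with the Hausdorff metric, is homeomorphic to the
quotient `ℝⁿ/{±1}`, the open cone over `ℝP^{n-1}`. -/
theorem segments_homeomorphic_cone (n : ℕ) (hn : 2 ≤ n) :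
    Nonempty
      ({S : NonemptyCompacts (EuclideanSpace ℝ (Fin n)) //
          ∃ v : EuclideanSpace ℝ (Fin n),
            (S : Set (EuclideanSpace ℝ (Fin n))) = segment ℝ (-v) v} ≃ₜ
        Quot (fun x y : EuclideanSpace ℝ (Fin n) => x = -y)) := by
  set R := fun x y : EuclideanSpace ℝ (Fin n) => x = -y with hR
  set Sub := {S : NonemptyCompacts (EuclideanSpace ℝ (Fin n)) //
      ∃ v : EuclideanSpace ℝ (Fin n),
        (S : Set (EuclideanSpace ℝ (Fin n))) = segment ℝ (-v) v} with hSub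
  -- the basic map
  set f : EuclideanSpace ℝ (Fin n) → Sub := fun v => ⟨segNC v, ⟨v, rfl⟩⟩ with hf
  have hresp : ∀ a b, R a b → f a = f b := by
    intro a b hab
    subst hab
    apply Subtype.ext
    apply NonemptyCompacts.ext
    rw [segNC_coe, segNC_coe, neg_neg, segment_symm]
  have fcont : Continuous f := by
    apply Continuous.subtype_mk
    apply LipschitzWith.continuous (K := 1)
    intro a b
    rw [edist_dist, edist_dist, ENNReal.coe_one, one_mul]
    exact ENNReal.ofReal_le_ofReal (segNC_lipschitz a b)
  haveI : SequentialSpace Sub := inferInstance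
  haveI : CompactlyGeneratedSpace Sub := inferInstance
  have fproper : IsProperMap (fun v => (f v : Sub)) := by
    rw [isProperMap_iff_isCompact_preimage]
    refine ⟨fcont, fun K hK => ?_⟩
    obtain ⟨r, hr⟩ := hK.isBounded.subset_closedBall (f 0)
    apply (isCompact_closedBall (0 : EuclideanSpace ℝ (Fin n)) r).of_isClosed_subset
    · exact hK.isClosed.preimage fcont
    · intro v hv
      have h1 : dist (f v) (f 0) ≤ r := hr hv
      have h2 : ‖v‖ ≤ dist (f v) (f 0) := by
        rw [Subtype.dist_eq]
        exact norm_le_dist_segNC v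
      simp only [mem_closedBall, dist_zero_right]
      linarith
  -- the induced map on the quotient
  set F : Quot R → Sub := Quot.lift f hresp with hF
  have Fbij : Function.Bijective F := by
    constructor
    · intro x y
      induction x using Quot.ind with | _ a =>
      induction y using Quot.ind with | _ b =>
      intro hab
      have hab' : f a = f b := hab
      have : segNC a = segNC b := congrArg Subtype.val hab'
      rcases segNC_inj this with h | h
      · rw [h]
      · exact Quot.sound h
    · rintro ⟨S, v, hS⟩
      refine ⟨Quot.mk R v, ?_⟩
      have hfv : f v = ⟨S, ⟨v, hS⟩⟩ := by
        apply Subtype.ext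
        apply NonemptyCompacts.ext
        rw [hS]
        exact segNC_coe v
      exact hfv
  have Fcont : Continuous F := continuous_quot_lift hresp fcont
  have Fclosed : IsClosedMap F := by
    intro C hC
    have h1 : F '' C = (fun v => (f v : Sub)) '' (Quot.mk R ⁻¹' C) := by
      conv_lhs => rw [← Set.image_preimage_eq C (Quot.mk_surjective)]
      rw [Set.image_image]
    rw [h1]
    exact fproper.isClosedMap _ (hC.preimage continuous_quot_mk)
  have Fopen : IsOpenMap F := by
    intro U hU
    have h1 : F '' U = (F '' Uᶜ)ᶜ := by
      rw [Set.image_compl_eq Fbij, compl_compl]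
    rw [h1]
    exact (Fclosed _ hU.isClosed_compl).isOpen_compl
  exact ⟨(Equiv.toHomeomorphOfContinuousOpen (Equiv.ofBijective F Fbij) Fcont Fopen).symm⟩
end

section
/- The hyperspace K_s^{0≤1} of convex compacta of dimension at most 1 in ℝⁿ with Steiner point at the origin is a Z-set in K_s: every continuous map from the Hilbert cube Q to K_s can be uniformly approximated by a continuous map whose image misses K_s^{0≤1}. -/
open Metric MeasureTheory Set TopologicalSpace
open scoped RealInnerProductSpace Pointwise

/-- The Steiner point `s(D) = (1/vol Bⁿ) ∫_{S^{n-1}} h_D(u) • u dσ(u)`,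
where `σ` is the spherical (surface) measure on the unit sphere. -/
noncomputable def steiner {n : ℕ} (D : Set (EuclideanSpace ℝ (Fin n))) :
    EuclideanSpace ℝ (Fin n) :=
  (volume (closedBall (0 : EuclideanSpace ℝ (Fin n)) 1)).toReal⁻¹ •
    ∫ u : sphere (0 : EuclideanSpace ℝ (Fin n)) 1,
      suppFn D (u : EuclideanSpace ℝ (Fin n)) • (u : EuclideanSpace ℝ (Fin n))
      ∂((volume : Measure (EuclideanSpace ℝ (Fin n))).toSphere)

namespace ZsetAux

variable {n : ℕ}

/-- Negation as a homeomorphism of the unit sphere. -/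
noncomputable def negSphere (n : ℕ) :
    sphere (0 : EuclideanSpace ℝ (Fin n)) 1 ≃ₜ sphere (0 : EuclideanSpace ℝ (Fin n)) 1 where
  toFun u := ⟨-u.1, by have := u.2; rw [mem_sphere_zero_iff_norm] at this ⊢; simp [this]⟩
  invFun u := ⟨-u.1, by have := u.2; rw [mem_sphere_zero_iff_norm] at this ⊢; simp [this]⟩
  left_inv u := Subtype.ext (neg_neg _)
  right_inv u := Subtype.ext (neg_neg _)
  continuous_toFun := by fun_prop
  continuous_invFun := by fun_prop

lemma toSphere_map_neg (n : ℕ) :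
    Measure.map (negSphere n) (volume : Measure (EuclideanSpace ℝ (Fin n))).toSphere
      = (volume : Measure (EuclideanSpace ℝ (Fin n))).toSphere := by
  refine Measure.ext fun s hs => ?_
  rw [Measure.map_apply (negSphere n).measurable hs]
  have hs' : MeasurableSet ((negSphere n) ⁻¹' s) := (negSphere n).measurable hs
  rw [Measure.toSphere_apply' _ hs', Measure.toSphere_apply' _ hs]
  have h1 : ((↑) '' ((negSphere n) ⁻¹' s) : Set (EuclideanSpace ℝ (Fin n)))
      = -((↑) '' s) := by
    ext x
    simp only [mem_image, mem_preimage, mem_neg]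
    constructor
    · rintro ⟨u, hu, rfl⟩
      exact ⟨negSphere n u, hu, rfl⟩
    · rintro ⟨w, hw, hwx⟩
      refine ⟨negSphere n w, by simpa [negSphere] using hw, ?_⟩
      simp only [negSphere, Homeomorph.homeomorph_mk_coe, Equiv.coe_fn_mk]
      rw [hwx, neg_neg]
  rw [h1, Set.smul_neg, Measure.measure_neg]

lemma integral_id_toSphere (n : ℕ) :
    (∫ u : sphere (0 : EuclideanSpace ℝ (Fin n)) 1, (u : EuclideanSpace ℝ (Fin n))
      ∂((volume : Measure (EuclideanSpace ℝ (Fin n))).toSphere)) = 0 := by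
  have hσ : (volume : Measure (EuclideanSpace ℝ (Fin n))).toSphere
      = Measure.map (negSphere n) (volume : Measure (EuclideanSpace ℝ (Fin n))).toSphere :=
    (toSphere_map_neg n).symm
  set σ := (volume : Measure (EuclideanSpace ℝ (Fin n))).toSphere with hσdef
  have h1 : (∫ u : sphere (0 : EuclideanSpace ℝ (Fin n)) 1, (u : EuclideanSpace ℝ (Fin n)) ∂σ)
      = ∫ u : sphere (0 : EuclideanSpace ℝ (Fin n)) 1, ((negSphere n u : EuclideanSpace ℝ (Fin n))) ∂σ := by
    nth_rewrite 1 [hσ]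
    rw [integral_map (negSphere n).measurable.aemeasurable
      (continuous_subtype_val.aestronglyMeasurable)]
  have h2 : (∫ u : sphere (0 : EuclideanSpace ℝ (Fin n)) 1,
      ((negSphere n u : EuclideanSpace ℝ (Fin n))) ∂σ)
      = -∫ u : sphere (0 : EuclideanSpace ℝ (Fin n)) 1, (u : EuclideanSpace ℝ (Fin n)) ∂σ := by
    rw [← integral_neg]
    rfl
  have h3 := h1.trans h2
  have h4 : (2 : ℝ) • (∫ u : sphere (0 : EuclideanSpace ℝ (Fin n)) 1,
      (u : EuclideanSpace ℝ (Fin n)) ∂σ) = 0 := by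
    rw [two_smul]
    nth_rewrite 1 [h3]
    simp
  simpa using (smul_eq_zero.1 h4).resolve_left (by norm_num)

lemma suppFn_cthickening {A : Set (EuclideanSpace ℝ (Fin n))} (hA : IsCompact A)
    (hne : A.Nonempty) {δ : ℝ} (hδ : 0 ≤ δ) {v : EuclideanSpace ℝ (Fin n)} (hv : ‖v‖ = 1) :
    suppFn (cthickening δ A) v = suppFn A v + δ := by
  obtain ⟨x₀, hx₀A, hx₀⟩ := hA.exists_isMaxOn hne
    ((continuous_id.inner continuous_const).continuousOn :
      ContinuousOn (fun x => ⟪x, v⟫) A)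
  have hAg : IsGreatest ((fun x => ⟪x, v⟫) '' A) ⟪x₀, v⟫ :=
    ⟨mem_image_of_mem _ hx₀A, fun z hz => by
      obtain ⟨x, hx, rfl⟩ := hz; exact hx₀ hx⟩
  have hsA : suppFn A v = ⟪x₀, v⟫ := hAg.csSup_eq
  have hcth : cthickening δ A = A + closedBall 0 δ := (hA.add_closedBall_zero hδ).symm
  have hmem : x₀ + δ • v ∈ cthickening δ A := by
    rw [hcth]
    exact Set.add_mem_add hx₀A (by
      simp only [mem_closedBall, dist_zero_right, norm_smul, hv, mul_one,
        Real.norm_eq_abs, abs_of_nonneg hδ]; exact le_rfl)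
  have hinner : ⟪x₀ + δ • v, v⟫ = ⟪x₀, v⟫ + δ := by
    rw [inner_add_left, real_inner_smul_left, real_inner_self_eq_norm_mul_norm, hv]
    ring
  have hg : IsGreatest ((fun x => ⟪x, v⟫) '' cthickening δ A) (⟪x₀, v⟫ + δ) := by
    constructor
    · exact ⟨_, hmem, hinner⟩
    · rintro z ⟨y, hy, rfl⟩
      rw [hcth] at hy
      obtain ⟨x, hx, w, hw, rfl⟩ := hy
      have h1 : ⟪x, v⟫ ≤ ⟪x₀, v⟫ := hx₀ hx
      have h2 : ⟪w, v⟫ ≤ δ := by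
        calc ⟪w, v⟫ ≤ ‖w‖ * ‖v‖ := real_inner_le_norm w v
          _ ≤ δ := by
            rw [hv, mul_one]
            simpa [dist_zero_right] using hw
      calc ⟪x + w, v⟫ = ⟪x, v⟫ + ⟪w, v⟫ := inner_add_left x w v
        _ ≤ ⟪x₀, v⟫ + δ := add_le_add h1 h2
  rw [suppFn, hg.csSup_eq, hsA]

lemma steiner_cthickening {A : Set (EuclideanSpace ℝ (Fin n))} (hA : IsCompact A)
    (hne : A.Nonempty) {δ : ℝ} (hδ : 0 ≤ δ) :
    steiner (cthickening δ A) = steiner A := by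
  unfold steiner
  congr 1
  have key : ∀ u : sphere (0 : EuclideanSpace ℝ (Fin n)) 1,
      suppFn (cthickening δ A) (u : EuclideanSpace ℝ (Fin n)) • (u : EuclideanSpace ℝ (Fin n))
      = suppFn A (u : EuclideanSpace ℝ (Fin n)) • (u : EuclideanSpace ℝ (Fin n))
        + δ • (u : EuclideanSpace ℝ (Fin n)) := fun u => by
    rw [suppFn_cthickening hA hne hδ (by simpa using mem_sphere_zero_iff_norm.1 u.2), add_smul]
  simp only [key]
  set σ := (volume : Measure (EuclideanSpace ℝ (Fin n))).toSphere
  have hG : Integrable (fun u : sphere (0 : EuclideanSpace ℝ (Fin n)) 1 =>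
      δ • (u : EuclideanSpace ℝ (Fin n))) σ := by
    refine Continuous.integrable_of_hasCompactSupport (by fun_prop) ?_
    exact IsCompact.of_isClosed_subset isCompact_univ (isClosed_tsupport _) (subset_univ _)
  have hGzero : (∫ u : sphere (0 : EuclideanSpace ℝ (Fin n)) 1,
      δ • (u : EuclideanSpace ℝ (Fin n)) ∂σ) = 0 := by
    rw [integral_smul, integral_id_toSphere, smul_zero]
  by_cases hF : Integrable (fun u : sphere (0 : EuclideanSpace ℝ (Fin n)) 1 =>
      suppFn A (u : EuclideanSpace ℝ (Fin n)) • (u : EuclideanSpace ℝ (Fin n))) σ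
  · rw [integral_add hF hG, hGzero, add_zero]
  · rw [integral_undef hF, integral_undef]
    intro h
    refine hF ((h.sub hG).congr (Filter.Eventually.of_forall fun u => ?_))
    simp

lemma hausdorffEdist_cthickening_le (δ : ℝ) (A B : Set (EuclideanSpace ℝ (Fin n))) :
    hausdorffEDist (cthickening δ A) (cthickening δ B)
      ≤ hausdorffEDist A B := by
  have key : ∀ C D : Set (EuclideanSpace ℝ (Fin n)), ∀ x ∈ cthickening δ C,
      infEDist x (cthickening δ D) ≤ hausdorffEDist C D := by
    intro C D x hx
    rw [infEDist_cthickening]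
    refine tsub_le_iff_left.2 ?_
    calc infEDist x D
        ≤ infEDist x C + hausdorffEDist C D :=
          infEDist_le_infEDist_add_hausdorffEDist
      _ ≤ ENNReal.ofReal δ + hausdorffEDist C D := by
          gcongr
          exact mem_cthickening_iff.1 hx
  refine hausdorffEDist_le_of_infEDist (key A B) ?_
  intro x hx
  rw [hausdorffEDist_comm]
  exact key B A x hx

lemma hausdorffEdist_self_cthickening_le {A : Set (EuclideanSpace ℝ (Fin n))} {δ : ℝ} :
    hausdorffEDist A (cthickening δ A) ≤ ENNReal.ofReal δ := by
  refine hausdorffEDist_le_of_infEDist ?_ ?_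
  · intro x hx
    have : infEDist x (cthickening δ A) = 0 :=
      infEDist_zero_of_mem (self_subset_cthickening _ hx)
    simp [this]
  · intro x hx
    exact mem_cthickening_iff.1 hx

end ZsetAux

/-- the convex compacta of affine dimension at most 1 with Steiner point at
the origin form a Z-set in `K_s`: every map of the Hilbert cube into `K_s` can be
uniformly approximated by maps whose images consist of sets not contained in any line. -/
theorem dim_le_one_is_Zset (n : ℕ) (hn : 2 ≤ n) :
    ∀ ε : ℝ, 0 < ε →
    ∀ f : (ℕ → Set.Icc (-1 : ℝ) 1) →
        {S : NonemptyCompacts (EuclideanSpace ℝ (Fin n)) //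
          Convex ℝ (S : Set (EuclideanSpace ℝ (Fin n))) ∧
          steiner (S : Set (EuclideanSpace ℝ (Fin n))) = 0},
      Continuous f →
      ∃ g : (ℕ → Set.Icc (-1 : ℝ) 1) →
          {S : NonemptyCompacts (EuclideanSpace ℝ (Fin n)) //
            Convex ℝ (S : Set (EuclideanSpace ℝ (Fin n))) ∧
            steiner (S : Set (EuclideanSpace ℝ (Fin n))) = 0},
        Continuous g ∧ (∀ q, dist (f q) (g q) < ε) ∧
        ∀ q, ¬ ∃ a b : EuclideanSpace ℝ (Fin n),
          ((g q).1 : Set (EuclideanSpace ℝ (Fin n))) ⊆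
            (affineSpan ℝ ({a, b} : Set (EuclideanSpace ℝ (Fin n))) :
              Set (EuclideanSpace ℝ (Fin n))) := by
  intro ε hε f hf
  classical
  set δ : ℝ := ε / 2 with hδdef
  have hδ0 : (0 : ℝ) < δ := half_pos hε
  let F : {S : NonemptyCompacts (EuclideanSpace ℝ (Fin n)) //
      Convex ℝ (S : Set (EuclideanSpace ℝ (Fin n))) ∧
      steiner (S : Set (EuclideanSpace ℝ (Fin n))) = 0} →
      {S : NonemptyCompacts (EuclideanSpace ℝ (Fin n)) //
      Convex ℝ (S : Set (EuclideanSpace ℝ (Fin n))) ∧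
      steiner (S : Set (EuclideanSpace ℝ (Fin n))) = 0} := fun S =>
    ⟨⟨⟨cthickening δ (S.1 : Set (EuclideanSpace ℝ (Fin n))), S.1.isCompact.cthickening⟩,
        S.1.nonempty.mono (self_subset_cthickening _)⟩,
      S.2.1.cthickening δ,
      by show steiner (cthickening δ (S.1 : Set (EuclideanSpace ℝ (Fin n)))) = 0
         rw [ZsetAux.steiner_cthickening S.1.isCompact S.1.nonempty hδ0.le]; exact S.2.2⟩
  have hFlip : LipschitzWith 1 F := by
    intro S T
    have h1 : edist (F S) (F T) = EMetric.hausdorffEdist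
        (cthickening δ (S.1 : Set (EuclideanSpace ℝ (Fin n))))
        (cthickening δ (T.1 : Set (EuclideanSpace ℝ (Fin n)))) := rfl
    have h2 : edist S T = EMetric.hausdorffEdist
        ((S.1 : Set (EuclideanSpace ℝ (Fin n)))) ((T.1 : Set (EuclideanSpace ℝ (Fin n)))) := rfl
    rw [h1, ENNReal.coe_one, one_mul, h2]
    exact ZsetAux.hausdorffEdist_cthickening_le δ _ _
  refine ⟨F ∘ f, (hFlip.continuous).comp hf, fun q => ?_, fun q => ?_⟩
  · have hdist : dist (f q) (F (f q)) ≤ δ := by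
      have h1 : dist (f q) (F (f q)) = Metric.hausdorffDist
          ((f q).1 : Set (EuclideanSpace ℝ (Fin n)))
          (cthickening δ ((f q).1 : Set (EuclideanSpace ℝ (Fin n)))) := rfl
      rw [h1, Metric.hausdorffDist]
      exact ENNReal.toReal_le_of_le_ofReal hδ0.le ZsetAux.hausdorffEdist_self_cthickening_le
    calc dist (f q) ((F ∘ f) q) ≤ δ := hdist
      _ < ε := by rw [hδdef]; linarith
  · rintro ⟨a, b, hsub⟩
    obtain ⟨x₀, hx₀⟩ := (f q).1.nonempty
    set W : AffineSubspace ℝ (EuclideanSpace ℝ (Fin n)) :=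
      affineSpan ℝ ({a, b} : Set (EuclideanSpace ℝ (Fin n))) with hW
    have hball : closedBall x₀ δ ⊆ (W : Set (EuclideanSpace ℝ (Fin n))) :=
      (closedBall_subset_cthickening hx₀ δ).trans hsub
    have hx₀W : x₀ ∈ W := hball (mem_closedBall_self hδ0.le)
    have hdir : ∀ w : EuclideanSpace ℝ (Fin n), ‖w‖ ≤ δ → w ∈ W.direction := by
      intro w hw
      have h1 : x₀ + w ∈ W := hball (by
        simp only [mem_closedBall, dist_eq_norm]
        simpa using hw)
      have h2 := AffineSubspace.vsub_mem_direction h1 hx₀W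
      simpa [vsub_eq_sub] using h2
    have htop : W.direction = ⊤ := by
      rw [Submodule.eq_top_iff']
      intro v
      have hc : (0 : ℝ) < δ / (‖v‖ + 1) := by positivity
      have h1 : (δ / (‖v‖ + 1)) • v ∈ W.direction := by
        apply hdir
        rw [norm_smul, Real.norm_eq_abs, abs_of_pos hc]
        rw [div_mul_eq_mul_div, div_le_iff₀ (by positivity)]
        nlinarith [norm_nonneg v, hδ0]
      have h2 := W.direction.smul_mem (δ / (‖v‖ + 1))⁻¹ h1
      rwa [smul_smul, inv_mul_cancel₀ hc.ne', one_smul] at h2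
    have hle : Module.finrank ℝ W.direction ≤ 1 := by
      rw [hW, direction_affineSpan, vectorSpan_pair]
      by_cases hab : a -ᵥ b = 0
      · rw [hab, Submodule.span_zero_singleton]
        simp
      · rw [finrank_span_singleton hab]
    rw [htop] at hle
    have : Module.finrank ℝ (⊤ : Submodule ℝ (EuclideanSpace ℝ (Fin n)))
        = n := by
      rw [finrank_top, finrank_euclideanSpace_fin]
    omega
end

section
/- Every σ-compact subset of the space Σ^ℕ has empty interior, where Σ = {(t_i) ∈ [−1,1]^ℕ : sup_i |t_i| < 1}. -/
open Set

private lemma sigma19_compact_bound (j : ℕ)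
    (K : Set {f : ℕ → (ℕ → Set.Icc (-1 : ℝ) 1) // ∀ j, (⨆ i, |(f j i : ℝ)|) < 1})
    (hK : IsCompact K) :
    ∃ b : ℝ, 0 ≤ b ∧ b < 1 ∧ ∀ f ∈ K, ((f : ℕ → (ℕ → Set.Icc (-1 : ℝ) 1)) j 0 : ℝ) ≤ b := by
  rcases K.eq_empty_or_nonempty with h | h
  · exact ⟨0, le_refl _, by norm_num, by simp [h]⟩
  · have hcont : Continuous fun f : {f : ℕ → (ℕ → Set.Icc (-1 : ℝ) 1) //
        ∀ j, (⨆ i, |(f j i : ℝ)|) < 1} => ((f : ℕ → (ℕ → Set.Icc (-1 : ℝ) 1)) j 0 : ℝ) :=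
      continuous_subtype_val.comp ((continuous_apply 0).comp
        ((continuous_apply j).comp continuous_subtype_val))
    obtain ⟨f₀, hf₀K, hmax⟩ := hK.exists_isMaxOn h hcont.continuousOn
    have hbdd : BddAbove (Set.range fun i => |((f₀ : ℕ → (ℕ → Set.Icc (-1 : ℝ) 1)) j i : ℝ)|) := by
      refine ⟨1, ?_⟩
      rintro _ ⟨i, rfl⟩
      exact abs_le.mpr ⟨((f₀ : ℕ → (ℕ → Set.Icc (-1 : ℝ) 1)) j i).2.1,
        ((f₀ : ℕ → (ℕ → Set.Icc (-1 : ℝ) 1)) j i).2.2⟩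
    have h1 : ((f₀ : ℕ → (ℕ → Set.Icc (-1 : ℝ) 1)) j 0 : ℝ) < 1 := by
      calc ((f₀ : ℕ → (ℕ → Set.Icc (-1 : ℝ) 1)) j 0 : ℝ)
          ≤ |((f₀ : ℕ → (ℕ → Set.Icc (-1 : ℝ) 1)) j 0 : ℝ)| := le_abs_self _
        _ ≤ ⨆ i, |((f₀ : ℕ → (ℕ → Set.Icc (-1 : ℝ) 1)) j i : ℝ)| := le_ciSup hbdd 0
        _ < 1 := f₀.2 j
    refine ⟨max ((f₀ : ℕ → (ℕ → Set.Icc (-1 : ℝ) 1)) j 0 : ℝ) 0, le_max_right _ _,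
      max_lt h1 one_pos, fun f hf => le_max_of_le_left (hmax hf)⟩

/-- every σ-compact subset of `Σ^ℕ` has empty interior, where
`Σ = {t ∈ [-1,1]^ℕ : sup_i |t_i| < 1}` is the radial interior of the Hilbert cube. -/
theorem sigmaCompact_subset_of_power_has_empty_interior
    (A : Set {f : ℕ → (ℕ → Set.Icc (-1 : ℝ) 1) // ∀ j, (⨆ i, |(f j i : ℝ)|) < 1}) :
    IsSigmaCompact A → interior A = ∅ := by
  rintro ⟨K, hKc, hKU⟩
  rw [Set.eq_empty_iff_forall_notMem]
  intro x hx
  have hA : A ∈ nhds x := mem_interior_iff_mem_nhds.mp hx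
  rw [nhds_induced, Filter.mem_comap] at hA
  obtain ⟨T, hT, hTA⟩ := hA
  rw [nhds_pi, Filter.mem_pi] at hT
  obtain ⟨I, hIfin, t, ht, htT⟩ := hT
  obtain ⟨M, hM⟩ := hIfin.bddAbove
  set N : ℕ := M + 1 with hN
  have hIN : ∀ j ∈ I, j < N := fun j hj => Nat.lt_succ_of_le (hM hj)
  choose b hb0 hb1 hb2 using fun n => sigma19_compact_bound (N + n) (K n) (hKc n)
  set c : ℕ → ℝ := fun n => (b n + 1) / 2 with hc
  have hc0 : ∀ n, 0 ≤ c n := fun n => by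
    have := hb0 n; simp only [hc]; linarith
  have hc1 : ∀ n, c n < 1 := fun n => by
    have := hb1 n; simp only [hc]; linarith
  have hcb : ∀ n, b n < c n := fun n => by
    have := hb1 n; simp only [hc]; linarith
  set y : ℕ → ℕ → Set.Icc (-1 : ℝ) 1 := fun j i =>
    if j < N then x.1 j i
    else if i = 0 then ⟨c (j - N), ⟨by linarith [hc0 (j - N)], le_of_lt (hc1 (j - N))⟩⟩
    else ⟨0, by norm_num⟩ with hy
  have hysup : ∀ j, (⨆ i, |(y j i : ℝ)|) < 1 := by
    intro j
    by_cases hj : j < N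
    · have : (fun i => |(y j i : ℝ)|) = fun i => |(x.1 j i : ℝ)| := by
        funext i; simp [hy, hj]
      rw [this]
      exact x.2 j
    · have hle : (⨆ i, |(y j i : ℝ)|) ≤ c (j - N) := by
        apply ciSup_le
        intro i
        by_cases hi : i = 0
        · simp [hy, hj, hi, abs_of_nonneg (hc0 (j - N))]
        · simp [hy, hj, hi, hc0 (j - N)]
      exact lt_of_le_of_lt hle (hc1 (j - N))
  set y' : {f : ℕ → (ℕ → Set.Icc (-1 : ℝ) 1) // ∀ j, (⨆ i, |(f j i : ℝ)|) < 1} :=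
    ⟨y, hysup⟩ with hy'
  have hyA : y' ∈ A := by
    apply hTA
    apply htT
    intro j hj
    have : y j = x.1 j := by
      funext i; simp [hy, hIN j hj]
    show y j ∈ t j
    rw [this]
    exact mem_of_mem_nhds (ht j)
  rw [← hKU] at hyA
  obtain ⟨s, ⟨n, rfl⟩, hn⟩ := hyA
  have hle : ((y' : ℕ → (ℕ → Set.Icc (-1 : ℝ) 1)) (N + n) 0 : ℝ) ≤ b n := hb2 n y' hn
  have heq : ((y' : ℕ → (ℕ → Set.Icc (-1 : ℝ) 1)) (N + n) 0 : ℝ) = c n := by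
    have hnot : ¬ (N + n < N) := Nat.not_lt.mpr (Nat.le_add_right N n)
    simp [hy', hy, hnot]
  rw [heq] at hle
  exact absurd hle (not_le.mpr (hcb n))
end
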